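/- arXiv:2406.11730 — 3 statements merged into one kernel-verified Lean document; each statement's English description precedes it below -/
import Mathlib

section
/- Let N be a finite set of n players with n ≥ 3, let x_1, …, x_n and α be vectors in a real inner product space, and define the utility function U on subsets of N by U(S) = ‖α‖² − ‖(1/|S|)·Σ_{i∈S} x_i − α‖² for nonempty S and U(∅) = 0. Then for every j ∈ N the Shapley value of j equals φ_j(U) = A·‖x_j‖² + B·⟨Σ_{i∈N} x_i, x_j⟩ + C·‖Σ_{i∈N} x_i‖² + D·Σ_{i∈N} ‖x_i‖² + E·⟨x_j, α⟩ + F·⟨Σ_{i∈N} x_i, α⟩, where, writing H_n = Σ_{k=1}^n 1/k and H_n^{(2)} = Σ_{k=1}^n 1/k², the coefficients are A = −H_n^{(2)}/n + (2H_n − 3H_n^{(2)} + 1/n)/(n(n−1)) + 2(2H_n − 2H_n^{(2)} − 1 + 1/n)/(n(n−1)(n−2)), B = −2(H_n − H_n^{(2)} − 1/n + 1/n²)/((n−1)(n−2)), C = (2H_n − 2H_n^{(2)} − 1 + 1/n)/(n(n−1)(n−2)), D = (H_n^{(2)} − 1/n)/(n(n−1)) − (2H_n − 2H_n^{(2)}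 − 1 + 1/n)/(n(n−1)(n−2)), E = 2(H_n − 1/n)/(n−1), and F = −2(H_n − 1)/(n(n−1)). -/
open Finset RealInnerProductSpace

set_option linter.unusedSectionVars false

section AuxShapley


variable {ι : Type*} [DecidableEq ι]

lemma filt_eq (A : Finset ι) (i : ι) (hi : i ∈ A) (t : ℕ) :
    (A.powersetCard (t+1)).filter (fun S => i ∈ S)
      = ((A.erase i).powersetCard t).image (insert i) := by
  ext S
  simp only [mem_filter, mem_powersetCard, mem_image]
  constructor
  · rintro ⟨⟨hSA, hScard⟩, hiS⟩
    exact ⟨S.erase i, ⟨erase_subset_erase _ hSA, by rw [card_erase_of_mem hiS, hScard]; rfl⟩,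
      insert_erase hiS⟩
  · rintro ⟨S', ⟨hS'A, hS'card⟩, rfl⟩
    have hiS' : i ∉ S' := fun h => (mem_erase.mp (hS'A h)).1 rfl
    exact ⟨⟨insert_subset hi ((hS'A.trans (erase_subset _ _))), by
      rw [card_insert_of_notMem hiS', hS'card]⟩, mem_insert_self _ _⟩

lemma sum_mem_decomp {M : Type*} [AddCommMonoid M] (A : Finset ι) (t : ℕ)
    (h : ι → Finset ι → M) :
    ∑ S ∈ A.powersetCard (t+1), ∑ i ∈ S, h i S
      = ∑ i ∈ A, ∑ S ∈ (A.erase i).powersetCard t, h i (insert i S) := by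
  have step1 : ∀ S ∈ A.powersetCard (t+1), ∑ i ∈ S, h i S
      = ∑ i ∈ A, if i ∈ S then h i S else 0 := by
    intro S hS
    rw [Finset.sum_ite_mem, Finset.inter_eq_right.mpr (mem_powersetCard.mp hS).1]
  rw [Finset.sum_congr rfl step1, Finset.sum_comm]
  refine Finset.sum_congr rfl fun i hi => ?_
  rw [← Finset.sum_filter, filt_eq A i hi t, Finset.sum_image]
  intro S hS S' hS' hins
  have h1 : i ∉ S := fun h => (mem_erase.mp ((mem_powersetCard.mp hS).1 h)).1 rfl
  have h2 : i ∉ S' := fun h => (mem_erase.mp ((mem_powersetCard.mp hS').1 h)).1 rfl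
  rw [← erase_insert h1, ← erase_insert h2, hins]

lemma sum_lin (A : Finset ι) (t : ℕ) (f : ι → ℝ) :
    ∑ S ∈ A.powersetCard (t+1), ∑ i ∈ S, f i
      = ((A.card - 1).choose t : ℝ) * ∑ i ∈ A, f i := by
  rw [sum_mem_decomp, Finset.mul_sum]
  refine Finset.sum_congr rfl fun i hi => ?_
  rw [Finset.sum_const, card_powersetCard, card_erase_of_mem hi]
  simp [mul_comm]

lemma sum_quad (A : Finset ι) (hA : 2 ≤ A.card) (t : ℕ) (g : ι → ι → ℝ) :
    ∑ S ∈ A.powersetCard (t+1), ∑ i ∈ S, ∑ l ∈ S, g i l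
      = ((A.card - 1).choose t : ℝ) * ∑ i ∈ A, g i i
        + ((A.card - 1).choose t : ℝ) * t / ((A.card : ℝ) - 1)
          * ∑ i ∈ A, ∑ l ∈ A.erase i, g i l := by
  rw [sum_mem_decomp]
  have key : ∀ i ∈ A, ∑ S ∈ (A.erase i).powersetCard t, ∑ l ∈ insert i S, g i l
      = ((A.card - 1).choose t : ℝ) * g i i
        + ((A.card - 1).choose t : ℝ) * t / ((A.card : ℝ) - 1) * ∑ l ∈ A.erase i, g i l := by
    intro i hi
    have hins : ∀ S ∈ (A.erase i).powersetCard t, ∑ l ∈ insert i S, g i l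
        = g i i + ∑ l ∈ S, g i l := by
      intro S hS
      have hiS : i ∉ S := fun h => (mem_erase.mp ((mem_powersetCard.mp hS).1 h)).1 rfl
      rw [Finset.sum_insert hiS]
    rw [Finset.sum_congr rfl hins, Finset.sum_add_distrib, Finset.sum_const,
      card_powersetCard, card_erase_of_mem hi]
    congr 1
    · simp [mul_comm]
    · -- second piece
      rcases t with _ | t'
      · simp
      · rw [sum_lin, card_erase_of_mem hi]
        have hm1 : (1:ℕ) ≤ A.card - 1 := by omega
        have hne : ((A.card : ℝ) - 1) ≠ 0 := by
          have : (2:ℝ) ≤ (A.card : ℝ) := by exact_mod_cast hA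
          linarith
        have hnat : (A.card - 1) * (A.card - 1 - 1).choose t'
            = (A.card - 1).choose (t' + 1) * (t' + 1) := by
          have := Nat.add_one_mul_choose_eq (A.card - 2) t'
          have h2 : A.card - 2 + 1 = A.card - 1 := by omega
          have h3 : A.card - 1 - 1 = A.card - 2 := by omega
          rw [h3, ← h2]
          exact this
        have hcast : ((A.card - 1 - 1).choose t' : ℝ)
            = ((A.card - 1).choose (t' + 1) : ℝ) * (t' + 1) / ((A.card : ℝ) - 1) := by
          have hc : ((A.card - 1 : ℕ) : ℝ) = (A.card : ℝ) - 1 := by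
            have : (1:ℕ) ≤ A.card := by omega
            push_cast [Nat.cast_sub this]; ring
          have hnat' : ((A.card - 1 : ℕ) : ℝ) * ((A.card - 1 - 1).choose t' : ℝ)
              = ((A.card - 1).choose (t' + 1) : ℝ) * ((t' : ℝ) + 1) := by
            exact_mod_cast congrArg (Nat.cast : ℕ → ℝ) hnat
          rw [hc] at hnat'
          field_simp
          linarith [hnat']
        rw [hcast]
        push_cast
        ring
  rw [Finset.sum_congr rfl key, Finset.sum_add_distrib, ← Finset.mul_sum, ← Finset.mul_sum]

open RealInnerProductSpace

variable {E : Type*} [NormedAddCommGroup E] [InnerProductSpace ℝ E]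

lemma U_formula (x : ι → E) (α : E) (U : Finset ι → ℝ)
    (hU : ∀ S : Finset ι, S.Nonempty →
      U S = ‖α‖ ^ 2 - ‖(S.card : ℝ)⁻¹ • ∑ i ∈ S, x i - α‖ ^ 2)
    (S : Finset ι) (hS : S.Nonempty) :
    U S = 2 * (S.card : ℝ)⁻¹ * ⟪∑ i ∈ S, x i, α⟫
      - ((S.card : ℝ)⁻¹)^2 * ⟪∑ i ∈ S, x i, ∑ i ∈ S, x i⟫ := by
  rw [hU S hS, norm_sub_sq_real, norm_smul, real_inner_smul_left]
  have : ‖(S.card : ℝ)⁻¹‖ = (S.card : ℝ)⁻¹ := by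
    rw [Real.norm_eq_abs, abs_of_nonneg (by positivity)]
  rw [this, mul_pow, real_inner_self_eq_norm_sq]
  ring

lemma delta_pointwise (x : ι → E) (α : E) (U : Finset ι → ℝ)
    (hU : ∀ S : Finset ι, S.Nonempty →
      U S = ‖α‖ ^ 2 - ‖(S.card : ℝ)⁻¹ • ∑ i ∈ S, x i - α‖ ^ 2)
    (j : ι) (t : ℕ) (S : Finset ι) (hjS : j ∉ S) (hcardS : S.card = t + 1) :
    U (insert j S) - U S =
      (2 / ((t:ℝ)+2) * ⟪x j, α⟫ - ⟪x j, x j⟫ / ((t:ℝ)+2)^2)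
      + (2 / ((t:ℝ)+2) - 2 / ((t:ℝ)+1)) * ⟪∑ i ∈ S, x i, α⟫
      + (1 / ((t:ℝ)+1)^2 - 1 / ((t:ℝ)+2)^2) * ⟪∑ i ∈ S, x i, ∑ i ∈ S, x i⟫
      - 2 / ((t:ℝ)+2)^2 * ⟪∑ i ∈ S, x i, x j⟫ := by
  have hSne : S.Nonempty := Finset.card_pos.mp (by omega)
  rw [U_formula x α U hU (insert j S) (Finset.insert_nonempty j S),
      U_formula x α U hU S hSne,
      Finset.sum_insert hjS, Finset.card_insert_of_notMem hjS, hcardS]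
  rw [inner_add_left, inner_add_left, inner_add_right, inner_add_right,
    real_inner_comm (∑ i ∈ S, x i) (x j)]
  push_cast
  have h1 : ((t:ℝ) + 1) ≠ 0 := by positivity
  have h2 : ((t:ℝ) + 1 + 1) ≠ 0 := by positivity
  field_simp
  ring

set_option maxHeartbeats 2000000 in
lemma key_lemma [Fintype ι] (n t : ℕ) (hcard : Fintype.card ι = n) (hn : 3 ≤ n)
    (ht : t + 2 ≤ n) (x : ι → E) (α : E) (U : Finset ι → ℝ)
    (hU : ∀ S : Finset ι, S.Nonempty →
      U S = ‖α‖ ^ 2 - ‖(S.card : ℝ)⁻¹ • ∑ i ∈ S, x i - α‖ ^ 2)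
    (j : ι) :
    (((n-1).choose (t+1) : ℕ) : ℝ)⁻¹ *
      ∑ S ∈ (Finset.univ.erase j).powersetCard (t+1), (U (insert j S) - U S)
    = ((∑ i ∈ Finset.univ.erase j, ⟪x i, x i⟫) / ((n:ℝ)-1)
        - (∑ i ∈ Finset.univ.erase j, ∑ l ∈ (Finset.univ.erase j).erase i, ⟪x i, x l⟫)
            / (((n:ℝ)-1)*((n:ℝ)-2))) * (1/((t:ℝ)+1))
      + (2 * ⟪x j, α⟫
          - 2 * (∑ i ∈ Finset.univ.erase j, ⟪x i, α⟫) / ((n:ℝ)-1)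
          - (∑ i ∈ Finset.univ.erase j, ⟪x i, x i⟫) / ((n:ℝ)-1)
          + 3 * (∑ i ∈ Finset.univ.erase j, ∑ l ∈ (Finset.univ.erase j).erase i, ⟪x i, x l⟫)
              / (((n:ℝ)-1)*((n:ℝ)-2))
          - 2 * (∑ i ∈ Finset.univ.erase j, ⟪x i, x j⟫) / ((n:ℝ)-1)) * (1/((t:ℝ)+2))
      + (-(⟪x j, x j⟫)
          + (∑ i ∈ Finset.univ.erase j, ⟪x i, x i⟫) / ((n:ℝ)-1)
          - 2 * (∑ i ∈ Finset.univ.erase j, ∑ l ∈ (Finset.univ.erase j).erase i, ⟪x i, x l⟫)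
              / (((n:ℝ)-1)*((n:ℝ)-2))
          + 2 * (∑ i ∈ Finset.univ.erase j, ⟪x i, x j⟫) / ((n:ℝ)-1)) * (1/((t:ℝ)+2)^2) := by
  set A : Finset ι := Finset.univ.erase j with hAdef
  have hA : A.card = n - 1 := by
    rw [hAdef, card_erase_of_mem (mem_univ j), card_univ, hcard]
  have hA2 : 2 ≤ A.card := by omega
  set Q : ℝ := ∑ i ∈ A, ⟪x i, α⟫
  set G : ℝ := ∑ i ∈ A, ⟪x i, x i⟫
  set MG : ℝ := ∑ i ∈ A, ∑ l ∈ A.erase i, ⟪x i, x l⟫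
  set X : ℝ := ∑ i ∈ A, ⟪x i, x j⟫
  have pointwise : ∀ S ∈ A.powersetCard (t+1), U (insert j S) - U S =
      (2 / ((t:ℝ)+2) * ⟪x j, α⟫ - ⟪x j, x j⟫ / ((t:ℝ)+2)^2)
      + (2 / ((t:ℝ)+2) - 2 / ((t:ℝ)+1)) * ⟪∑ i ∈ S, x i, α⟫
      + (1 / ((t:ℝ)+1)^2 - 1 / ((t:ℝ)+2)^2) * ⟪∑ i ∈ S, x i, ∑ i ∈ S, x i⟫
      - 2 / ((t:ℝ)+2)^2 * ⟪∑ i ∈ S, x i, x j⟫ := by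
    intro S hS
    obtain ⟨hSA, hScard⟩ := mem_powersetCard.mp hS
    exact delta_pointwise x α U hU j t S
      (fun h => (mem_erase.mp (hSA h)).1 rfl) hScard
  rw [Finset.sum_congr rfl pointwise]
  have e1 : ∑ S ∈ A.powersetCard (t+1), ⟪∑ i ∈ S, x i, α⟫
      = ((A.card - 1).choose t : ℝ) * Q := by
    rw [← sum_lin]
    exact Finset.sum_congr rfl fun S _ => sum_inner S x α
  have e2 : ∑ S ∈ A.powersetCard (t+1), ⟪∑ i ∈ S, x i, x j⟫
      = ((A.card - 1).choose t : ℝ) * X := by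
    rw [← sum_lin]
    exact Finset.sum_congr rfl fun S _ => sum_inner S x (x j)
  have e3 : ∑ S ∈ A.powersetCard (t+1), ⟪∑ i ∈ S, x i, ∑ i ∈ S, x i⟫
      = ((A.card - 1).choose t : ℝ) * G
        + ((A.card - 1).choose t : ℝ) * t / ((A.card : ℝ) - 1) * MG := by
    rw [← sum_quad A hA2 t (fun i l => ⟪x i, x l⟫)]
    refine Finset.sum_congr rfl fun S _ => ?_
    rw [sum_inner]
    exact Finset.sum_congr rfl fun i _ => inner_sum S x (x i)
  rw [Finset.sum_sub_distrib, Finset.sum_add_distrib, Finset.sum_add_distrib,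
    Finset.sum_const, ← Finset.mul_sum, ← Finset.mul_sum, ← Finset.mul_sum,
    e1, e2, e3, card_powersetCard, hA]
  have hchoose : ((n:ℝ) - 1) * ((n - 1 - 1).choose t : ℝ)
      = ((n-1).choose (t+1) : ℝ) * ((t:ℝ) + 1) := by
    have h2 : n - 2 + 1 = n - 1 := by omega
    have hnat := Nat.add_one_mul_choose_eq (n - 2) t
    rw [h2] at hnat
    have h3 : n - 1 - 1 = n - 2 := by omega
    have hc : ((n - 1 : ℕ) : ℝ) = (n:ℝ) - 1 := by
      have : (1:ℕ) ≤ n := by omega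
      push_cast [Nat.cast_sub this]; ring
    rw [h3, ← hc]
    exact_mod_cast congrArg (Nat.cast : ℕ → ℝ) hnat
  have hcA : (((n - 1 : ℕ) : ℝ) - 1) = (n:ℝ) - 2 := by
    have h1 : (1:ℕ) ≤ n - 1 := by omega
    have h2 : (1:ℕ) ≤ n := by omega
    push_cast [Nat.cast_sub h2]
    ring
  have hcne : (((n-1).choose (t+1) : ℕ) : ℝ) ≠ 0 := by
    have : 0 < (n-1).choose (t+1) := Nat.choose_pos (by omega)
    positivity
  have ht1 : ((t:ℝ) + 1) ≠ 0 := by positivity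
  have ht2 : ((t:ℝ) + 2) ≠ 0 := by positivity
  have hn1 : ((n:ℝ) - 1) ≠ 0 := by
    have : (3:ℝ) ≤ (n:ℝ) := by exact_mod_cast hn
    linarith
  have hn2 : ((n:ℝ) - 2) ≠ 0 := by
    have : (3:ℝ) ≤ (n:ℝ) := by exact_mod_cast hn
    linarith
  have hD : ((n - 1 - 1).choose t : ℝ)
      = ((n-1).choose (t+1) : ℝ) * ((t:ℝ) + 1) / ((n:ℝ) - 1) := by
    field_simp
    linarith [hchoose]
  rw [hcA, hD, nsmul_eq_mul]
  field_simp
  ring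


lemma icc_to_range (n : ℕ) (f : ℕ → ℝ) :
    ∑ k ∈ Icc 1 n, f k = ∑ k ∈ Finset.range n, f (k+1) := by
  rw [← Finset.Ico_add_one_right_eq_Icc, Finset.sum_Ico_eq_sum_range]
  simp [add_comm]

lemma range_split (n : ℕ) (hn : 1 ≤ n) (f : ℕ → ℝ) :
    ∑ k ∈ Finset.range n, f k = ∑ t ∈ Finset.range (n-1), f (t+1) + f 0 := by
  conv_lhs => rw [show n = (n-1)+1 by omega]
  rw [Finset.sum_range_succ']

lemma range_split_top (n : ℕ) (hn : 1 ≤ n) (f : ℕ → ℝ) :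
    ∑ k ∈ Finset.range n, f k = ∑ t ∈ Finset.range (n-1), f t + f (n-1) := by
  conv_lhs => rw [show n = (n-1)+1 by omega]
  rw [Finset.sum_range_succ]

lemma B1 (n : ℕ) (hn : 3 ≤ n) (Hn : ℝ) (hHn : Hn = ∑ k ∈ Icc 1 n, (1 : ℝ) / k) :
    ∑ t ∈ Finset.range (n-1), 1/((t:ℝ)+1) = Hn - 1/n := by
  rw [hHn, icc_to_range, range_split_top n (by omega)]
  have hc : ((n - 1 : ℕ) : ℝ) + 1 = (n : ℝ) := by
    have : (1:ℕ) ≤ n := by omega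
    push_cast [Nat.cast_sub this]; ring
  push_cast
  rw [hc]
  ring

lemma B2 (n : ℕ) (hn : 3 ≤ n) (Hn : ℝ) (hHn : Hn = ∑ k ∈ Icc 1 n, (1 : ℝ) / k) :
    ∑ t ∈ Finset.range (n-1), 1/((t:ℝ)+2) = Hn - 1 := by
  rw [hHn, icc_to_range, range_split n (by omega)]
  push_cast
  ring_nf

lemma B4 (n : ℕ) (hn : 3 ≤ n) (Hn2 : ℝ) (hHn2 : Hn2 = ∑ k ∈ Icc 1 n, (1 : ℝ) / (k:ℝ)^2) :
    ∑ t ∈ Finset.range (n-1), 1/((t:ℝ)+2)^2 = Hn2 - 1 := by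
  rw [hHn2, icc_to_range, range_split n (by omega)]
  push_cast
  ring_nf

end AuxShapley

set_option maxHeartbeats 4000000 in
/-- The Shapley value of player `j` under the utility function
`U(S) = ‖α‖² − ‖(1/|S|)·Σ_{i∈S} x i − α‖²` (with `U ∅ = 0`) on a set of `n ≥ 3` players. -/
theorem chg_shapley_closed_form
    {ι : Type*} [Fintype ι] [DecidableEq ι]
    {E : Type*} [NormedAddCommGroup E] [InnerProductSpace ℝ E]
    (n : ℕ) (hn : 3 ≤ n) (hcard : Fintype.card ι = n)
    (x : ι → E) (α : E) (U : Finset ι → ℝ)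
    (hU : ∀ S : Finset ι, S.Nonempty →
      U S = ‖α‖ ^ 2 - ‖(S.card : ℝ)⁻¹ • ∑ i ∈ S, x i - α‖ ^ 2)
    (hU0 : U ∅ = 0)
    (φ : ι → ℝ)
    (hφ : ∀ i : ι, φ i = (n : ℝ)⁻¹ * ∑ k ∈ Icc 1 n,
      ((Nat.choose (n - 1) (k - 1) : ℝ))⁻¹ *
        ∑ S ∈ (Finset.univ.erase i).powerset.filter (fun S => S.card = k - 1),
          (U (insert i S) - U S))
    (j : ι)
    (Hn Hn2 : ℝ)
    (hHn : Hn = ∑ k ∈ Icc 1 n, (1 : ℝ) / k)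
    (hHn2 : Hn2 = ∑ k ∈ Icc 1 n, (1 : ℝ) / (k : ℝ) ^ 2) :
    φ j =
      (-Hn2 / n + (2 * Hn - 3 * Hn2 + 1 / n) / (n * (n - 1))
          + 2 * (2 * Hn - 2 * Hn2 - 1 + 1 / n) / (n * (n - 1) * (n - 2))) * ‖x j‖ ^ 2
      + (-(2 * (Hn - Hn2 - 1 / n + 1 / (n : ℝ) ^ 2) / ((n - 1) * (n - 2))))
          * ⟪(∑ i, x i), x j⟫
      + ((2 * Hn - 2 * Hn2 - 1 + 1 / n) / (n * (n - 1) * (n - 2))) * ‖∑ i, x i‖ ^ 2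
      + ((Hn2 - 1 / n) / (n * (n - 1))
          - (2 * Hn - 2 * Hn2 - 1 + 1 / n) / (n * (n - 1) * (n - 2))) * ∑ i, ‖x i‖ ^ 2
      + (2 * (Hn - 1 / n) / (n - 1)) * ⟪x j, α⟫
      + (-(2 * (Hn - 1) / (n * (n - 1)))) * ⟪(∑ i, x i), α⟫ := by
  have hn1 : ((n:ℝ) - 1) ≠ 0 := by
    have : (3:ℝ) ≤ (n:ℝ) := by exact_mod_cast hn
    linarith
  have hn2 : ((n:ℝ) - 2) ≠ 0 := by
    have : (3:ℝ) ≤ (n:ℝ) := by exact_mod_cast hn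
    linarith
  have hnn : ((n:ℝ)) ≠ 0 := by
    have : (3:ℝ) ≤ (n:ℝ) := by exact_mod_cast hn
    linarith
  rw [hφ j]
  have hfilt : ∀ k : ℕ, (Finset.univ.erase j).powerset.filter (fun S => S.card = k)
      = (Finset.univ.erase j).powersetCard k := fun k => powersetCard_eq_filter.symm
  simp only [hfilt]
  rw [icc_to_range, range_split n (by omega)]
  simp only [Nat.add_sub_cancel]
  -- k = 1 term
  have hk1 : ((Nat.choose (n-1) 0 : ℝ))⁻¹ *
      ∑ S ∈ (Finset.univ.erase j).powersetCard 0, (U (insert j S) - U S)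
      = 2 * ⟪x j, α⟫ - ⟪x j, x j⟫ := by
    simp only [Nat.choose_zero_right, Nat.cast_one, inv_one, one_mul,
      Finset.powersetCard_zero, Finset.sum_singleton]
    rw [hU0, show insert j (∅:Finset ι) = {j} from rfl, U_formula x α U hU {j} (Finset.singleton_nonempty j)]
    simp [real_inner_self_eq_norm_sq]
  rw [hk1]
  -- each t term via key lemma
  have hterm : ∀ t ∈ Finset.range (n-1),
      ((Nat.choose (n-1) (t+1) : ℝ))⁻¹ *
        ∑ S ∈ (Finset.univ.erase j).powersetCard (t+1), (U (insert j S) - U S)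
      = ((∑ i ∈ Finset.univ.erase j, ⟪x i, x i⟫) / ((n:ℝ)-1)
          - (∑ i ∈ Finset.univ.erase j, ∑ l ∈ (Finset.univ.erase j).erase i, ⟪x i, x l⟫)
              / (((n:ℝ)-1)*((n:ℝ)-2))) * (1/((t:ℝ)+1))
        + (2 * ⟪x j, α⟫
            - 2 * (∑ i ∈ Finset.univ.erase j, ⟪x i, α⟫) / ((n:ℝ)-1)
            - (∑ i ∈ Finset.univ.erase j, ⟪x i, x i⟫) / ((n:ℝ)-1)
            + 3 * (∑ i ∈ Finset.univ.erase j, ∑ l ∈ (Finset.univ.erase j).erase i, ⟪x i, x l⟫)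
                / (((n:ℝ)-1)*((n:ℝ)-2))
            - 2 * (∑ i ∈ Finset.univ.erase j, ⟪x i, x j⟫) / ((n:ℝ)-1)) * (1/((t:ℝ)+2))
        + (-(⟪x j, x j⟫)
            + (∑ i ∈ Finset.univ.erase j, ⟪x i, x i⟫) / ((n:ℝ)-1)
            - 2 * (∑ i ∈ Finset.univ.erase j, ∑ l ∈ (Finset.univ.erase j).erase i, ⟪x i, x l⟫)
                / (((n:ℝ)-1)*((n:ℝ)-2))
            + 2 * (∑ i ∈ Finset.univ.erase j, ⟪x i, x j⟫) / ((n:ℝ)-1)) * (1/((t:ℝ)+2)^2) :=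
    fun t ht => key_lemma n t hcard hn (by simp only [Finset.mem_range] at ht; omega) x α U hU j
  rw [Finset.sum_congr rfl hterm]
  rw [Finset.sum_add_distrib, Finset.sum_add_distrib,
    ← Finset.mul_sum, ← Finset.mul_sum, ← Finset.mul_sum,
    B1 n hn Hn hHn, B2 n hn Hn hHn, B4 n hn Hn2 hHn2]
  -- relations between scalar quantities
  have hsum_univ : ∑ i, x i = x j + ∑ i ∈ Finset.univ.erase j, x i :=
    (Finset.add_sum_erase _ x (mem_univ j)).symm
  have r0 : ‖x j‖^2 = ⟪x j, x j⟫ := (real_inner_self_eq_norm_sq _).symm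
  have r1 : ⟪∑ i, x i, α⟫ = ⟪x j, α⟫ + ∑ i ∈ Finset.univ.erase j, ⟪x i, α⟫ := by
    rw [hsum_univ, inner_add_left, sum_inner]
  have r2 : ⟪∑ i, x i, x j⟫ = ⟪x j, x j⟫ + ∑ i ∈ Finset.univ.erase j, ⟪x i, x j⟫ := by
    rw [hsum_univ, inner_add_left, sum_inner]
  have r3 : ∑ i, ‖x i‖^2 = ⟪x j, x j⟫ + ∑ i ∈ Finset.univ.erase j, ⟪x i, x i⟫ := by
    rw [← Finset.add_sum_erase _ _ (mem_univ j), ← r0]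
    exact congrArg _ (Finset.sum_congr rfl fun i _ => (real_inner_self_eq_norm_sq _).symm)
  have hTT : ⟪∑ i ∈ Finset.univ.erase j, x i, ∑ i ∈ Finset.univ.erase j, x i⟫
      = (∑ i ∈ Finset.univ.erase j, ⟪x i, x i⟫)
        + ∑ i ∈ Finset.univ.erase j, ∑ l ∈ (Finset.univ.erase j).erase i, ⟪x i, x l⟫ := by
    rw [sum_inner, ← Finset.sum_add_distrib]
    refine Finset.sum_congr rfl fun i hi => ?_
    rw [inner_sum, ← Finset.add_sum_erase _ _ hi]
  have r4 : ‖∑ i, x i‖^2 = ⟪x j, x j⟫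
      + 2 * ∑ i ∈ Finset.univ.erase j, ⟪x i, x j⟫
      + ((∑ i ∈ Finset.univ.erase j, ⟪x i, x i⟫)
        + ∑ i ∈ Finset.univ.erase j, ∑ l ∈ (Finset.univ.erase j).erase i, ⟪x i, x l⟫) := by
    rw [← real_inner_self_eq_norm_sq, hsum_univ, inner_add_left, inner_add_right,
      inner_add_right, hTT, sum_inner, inner_sum]
    have : ∑ i ∈ Finset.univ.erase j, ⟪x j, x i⟫
        = ∑ i ∈ Finset.univ.erase j, ⟪x i, x j⟫ :=
      Finset.sum_congr rfl fun i _ => real_inner_comm _ _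
    rw [this]
    ring
  rw [r0, r1, r2, r3, r4]
  field_simp
  ring
end

section
/- Let N be a finite set of n players with n ≥ 2, let x_1, …, x_n and α be vectors in a real inner product space, and define U₂(S) = 2·⟨(1/|S|)·Σ_{i∈S} x_i, α⟩ for nonempty S ⊆ N and U₂(∅) = 0. Then for every j ∈ N, φ_j(U₂) = 2·[ ((1/n)·Σ_{k=1}^n 1/k)·⟨x_j, α⟩ − ((Σ_{k=2}^n 1/k)/(n(n−1)))·Σ_{i∈N∖{j}} ⟨x_i, α⟩ ]. -/
open Finset RealInnerProductSpace

lemma aux_count {ι : Type*} [DecidableEq ι] (A : Finset ι) (i : ι) (hi : i ∈ A) (m : ℕ) :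
    ((A.powersetCard (m+1)).filter (fun S => i ∈ S)).card = (A.card - 1).choose m := by
  have h1 : A.powersetCard (m+1) =
      powersetCard (m+1) (A.erase i) ∪ (powersetCard m (A.erase i)).image (insert i) := by
    conv_lhs => rw [← insert_erase hi]
    exact powersetCard_succ_insert (notMem_erase i A) m
  rw [h1, filter_union]
  have h2 : (powersetCard (m+1) (A.erase i)).filter (fun S => i ∈ S) = ∅ := by
    refine filter_eq_empty_iff.2 fun S hS => ?_
    have := (mem_powersetCard.1 hS).1
    exact fun hiS => notMem_erase i A (this hiS)
  have h3 : ((powersetCard m (A.erase i)).image (insert i)).filter (fun S => i ∈ S)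
      = (powersetCard m (A.erase i)).image (insert i) := by
    refine filter_true_of_mem fun S hS => ?_
    obtain ⟨T, _, rfl⟩ := mem_image.1 hS
    exact mem_insert_self i T
  rw [h2, h3, empty_union, card_image_of_injOn, card_powersetCard, card_erase_of_mem hi]
  intro S hS T hT hST
  have hiS : i ∉ S := fun h => notMem_erase i A ((mem_powersetCard.1 hS).1 h)
  have hiT : i ∉ T := fun h => notMem_erase i A ((mem_powersetCard.1 hT).1 h)
  have := congrArg (Finset.erase · i) hST
  simpa [erase_insert hiS, erase_insert hiT] using this

lemma aux_sum {ι : Type*} [DecidableEq ι] (A : Finset ι) (m : ℕ) (g : ι → ℝ) :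
    ∑ S ∈ A.powersetCard (m+1), ∑ i ∈ S, g i
      = ((A.card - 1).choose m : ℝ) * ∑ i ∈ A, g i := by
  have h : ∀ S ∈ A.powersetCard (m+1), ∑ i ∈ S, g i = ∑ i ∈ A, if i ∈ S then g i else 0 := by
    intro S hS
    rw [sum_ite_mem, inter_eq_right.2 (mem_powersetCard.1 hS).1]
  rw [sum_congr rfl h, sum_comm, mul_sum]
  refine sum_congr rfl fun i hi => ?_
  rw [← sum_filter, sum_const, aux_count A i hi m, nsmul_eq_mul]

/-- The Shapley value of player `j` under the utility
`U₂(S) = 2·⟪(1/|S|)·Σ_{i∈S} x i, α⟫` (with `U₂ ∅ = 0`) on a set of `n ≥ 2` players. -/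
theorem shapley_U2_erase_form
    {ι : Type*} [Fintype ι] [DecidableEq ι]
    {E : Type*} [NormedAddCommGroup E] [InnerProductSpace ℝ E]
    (n : ℕ) (hn : 2 ≤ n) (hcard : Fintype.card ι = n)
    (x : ι → E) (α : E) (U₂ : Finset ι → ℝ)
    (hU : ∀ S : Finset ι, S.Nonempty →
      U₂ S = 2 * ⟪(S.card : ℝ)⁻¹ • ∑ i ∈ S, x i, α⟫)
    (hU0 : U₂ ∅ = 0)
    (φ : ι → ℝ)
    (hφ : ∀ i : ι, φ i = (n : ℝ)⁻¹ * ∑ k ∈ Icc 1 n,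
      ((Nat.choose (n - 1) (k - 1) : ℝ))⁻¹ *
        ∑ S ∈ (Finset.univ.erase i).powerset.filter (fun S => S.card = k - 1),
          (U₂ (insert i S) - U₂ S))
    (j : ι) :
    φ j = 2 * (((n : ℝ)⁻¹ * ∑ k ∈ Icc 1 n, (1 : ℝ) / k) * ⟪x j, α⟫
      - ((∑ k ∈ Icc 2 n, (1 : ℝ) / k) / (n * (n - 1)))
          * ∑ i ∈ Finset.univ.erase j, ⟪x i, α⟫) := by
  set f : ι → ℝ := fun i => ⟪x i, α⟫ with hf
  set A : Finset ι := Finset.univ.erase j with hA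
  set T : ℝ := ∑ i ∈ A, f i with hT
  have hU' : ∀ S : Finset ι, U₂ S = 2 * ((S.card : ℝ)⁻¹ * ∑ i ∈ S, f i) := by
    intro S
    rcases S.eq_empty_or_nonempty with rfl | hS
    · simp [hU0]
    · rw [hU S hS, real_inner_smul_left, sum_inner]
  have hAcard : A.card = n - 1 := by
    rw [hA, card_erase_of_mem (mem_univ j), card_univ, hcard]
  have hn1 : ((n : ℝ) - 1) ≠ 0 := by
    have : (2:ℝ) ≤ n := by exact_mod_cast hn
    linarith
  have hn1cast : ((n - 1 : ℕ) : ℝ) = (n : ℝ) - 1 := by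
    push_cast [Nat.cast_sub (by omega : 1 ≤ n)]; ring
  -- key per-k computation
  have key : ∀ k ∈ Icc 1 n,
      ((Nat.choose (n - 1) (k - 1) : ℝ))⁻¹ *
        ∑ S ∈ A.powerset.filter (fun S => S.card = k - 1), (U₂ (insert j S) - U₂ S)
      = 2 / k * f j - (if 2 ≤ k then 2 / (k * ((n:ℝ) - 1)) * T else 0) := by
    intro k hk
    rw [mem_Icc] at hk
    obtain ⟨m, rfl⟩ : ∃ m, k = m + 1 := ⟨k - 1, by omega⟩
    have hfilter : A.powerset.filter (fun S => S.card = (m+1) - 1) = A.powersetCard m := by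
      rw [powersetCard_eq_filter]
      simp only [Nat.add_sub_cancel]
    rw [hfilter]
    rcases Nat.eq_zero_or_pos m with rfl | hm
    · -- k = 1
      rw [if_neg (by omega)]
      simp only [powersetCard_zero, sum_singleton, LawfulSingleton.insert_empty_eq]
      rw [hU' {j}, hU0]
      simp
    · obtain ⟨m', rfl⟩ : ∃ m', m = m' + 1 := ⟨m - 1, by omega⟩
      -- k = m' + 2
      have hsummand : ∀ S ∈ A.powersetCard (m'+1),
          U₂ (insert j S) - U₂ S
          = 2 * (((m'+2 : ℕ) : ℝ))⁻¹ * f j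
            + (2 * (((m'+2 : ℕ) : ℝ))⁻¹ - 2 * (((m'+1 : ℕ) : ℝ))⁻¹) * ∑ i ∈ S, f i := by
        intro S hS
        obtain ⟨hSA, hScard⟩ := mem_powersetCard.1 hS
        have hjS : j ∉ S := fun h => notMem_erase j _ (hSA h)
        rw [hU' (insert j S), hU' S, card_insert_of_notMem hjS, sum_insert hjS, hScard]
        push_cast
        ring
      rw [sum_congr rfl hsummand, sum_add_distrib, sum_const, card_powersetCard, hAcard,
        ← mul_sum, aux_sum, hAcard]
      have hle : m' + 1 ≤ n - 1 := by omega
      have hC1 : (((n-1).choose (m'+1) : ℕ) : ℝ) ≠ 0 := by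
        exact_mod_cast (Nat.choose_pos hle).ne'
      have hrel : ((n - 1 : ℕ) : ℝ) * ((n - 1 - 1).choose m' : ℝ)
          = ((n-1).choose (m'+1) : ℝ) * ((m' + 1 : ℕ) : ℝ) := by
        have h := Nat.add_one_mul_choose_eq (n - 2) m'
        have h2 : n - 2 + 1 = n - 1 := by omega
        have h3 : n - 1 - 1 = n - 2 := by omega
        rw [h2] at h
        rw [h3]
        exact_mod_cast h
      have hif : (if 2 ≤ m' + 1 + 1 then 2 / ((m'+1+1 : ℕ) * ((n:ℝ) - 1)) * T else 0)
          = 2 / (((m'+2:ℕ):ℝ) * ((n:ℝ) - 1)) * T := by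
        rw [if_pos (by omega)]
      rw [hif]
      have hK : (((m'+2:ℕ)):ℝ) ≠ 0 := by positivity
      have hK1 : (((m'+1:ℕ)):ℝ) ≠ 0 := by positivity
      have hC2 : ((n - 1 - 1).choose m' : ℝ)
          = ((n-1).choose (m'+1) : ℝ) * ((m' + 1 : ℕ) : ℝ) / ((n:ℝ) - 1) := by
        rw [eq_div_iff hn1]
        rw [hn1cast] at hrel
        linarith [hrel]
      rw [hC2]
      have : ((m' + 1 + 1 : ℕ) : ℝ) = ((m' + 2 : ℕ) : ℝ) := by push_cast; ring
      rw [this]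
      rw [show m' + 1 + 1 - 1 = m' + 1 by omega, ← hT]
      push_cast
      have hm2 : (m':ℝ) + 2 ≠ 0 := by positivity
      field_simp
      have h2m : (2 + (m':ℝ))⁻¹ * (2 + m') = 1 := inv_mul_cancel₀ (by positivity)
      linear_combination (2 * f j * ((n - 1).choose (m' + 1) : ℝ) * ((n:ℝ) - 1)) * h2m
  rw [hφ j, sum_congr rfl key, sum_sub_distrib]
  have hsplit : ∑ k ∈ Icc 1 n, (if 2 ≤ k then 2 / (k * ((n:ℝ) - 1)) * T else 0)
      = ∑ k ∈ Icc 2 n, 2 / (k * ((n:ℝ) - 1)) * T := by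
    rw [← sum_filter]
    congr 1
    ext k
    simp only [mem_filter, mem_Icc]
    omega
  rw [hsplit]
  have e1 : ∑ k ∈ Icc 1 n, 2 / (k:ℝ) * f j = (∑ k ∈ Icc 1 n, (1:ℝ) / k) * (2 * f j) := by
    rw [sum_mul]; exact sum_congr rfl fun k _ => by ring
  have e2 : ∑ k ∈ Icc 2 n, 2 / ((k:ℝ) * ((n:ℝ) - 1)) * T
      = (∑ k ∈ Icc 2 n, (1:ℝ) / k) * (2 * T / ((n:ℝ) - 1)) := by
    rw [sum_mul]
    refine sum_congr rfl fun k hk => ?_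
    rw [mem_Icc] at hk
    have hk0 : (k:ℝ) ≠ 0 := Nat.cast_ne_zero.2 (by omega)
    field_simp
  have hnne : (n:ℝ) ≠ 0 := Nat.cast_ne_zero.2 (by omega)
  rw [e1, e2, hT, hA, hf]
  field_simp
end

section
/- Let N be a finite set of n players with n ≥ 2, let x_1, …, x_n and α be vectors in a real inner product space, and define U₂(S) = 2·⟨(1/|S|)·Σ_{i∈S} x_i, α⟩ for nonempty S ⊆ N and U₂(∅) = 0. Then for every j ∈ N, φ_j(U₂) = 2·[ ((Σ_{k=1}^{n−1} 1/k)/(n−1))·⟨x_j, α⟩ − ((Σ_{k=1}^n 1/k − 1)/(n(n−1)))·⟨Σ_{i∈N} x_i, α⟩ ]. -/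
open Finset RealInnerProductSpace


lemma count_lemma {ι : Type*} [DecidableEq ι] (T : Finset ι) (i : ι) (hi : i ∈ T) (m : ℕ) :
    ((T.powersetCard (m+1)).filter (fun S => i ∈ S)).card = (T.card - 1).choose m := by
  have hfwd : ∀ S ∈ (T.powersetCard (m+1)).filter (fun S => i ∈ S),
      S.erase i ∈ (T.erase i).powersetCard m := by
    intro S hS
    simp only [mem_filter, mem_powersetCard] at hS
    rw [mem_powersetCard]
    refine ⟨fun x hx => ?_, ?_⟩
    · rw [mem_erase] at hx ⊢
      exact ⟨hx.1, hS.1.1 hx.2⟩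
    · rw [card_erase_of_mem hS.2, hS.1.2]; rfl
  have hbwd : ∀ S ∈ (T.erase i).powersetCard m,
      insert i S ∈ (T.powersetCard (m+1)).filter (fun S => i ∈ S) := by
    intro S hS
    rw [mem_powersetCard] at hS
    have hiS : i ∉ S := fun h => (mem_erase.1 (hS.1 h)).1 rfl
    simp only [mem_filter, mem_powersetCard]
    refine ⟨⟨fun x hx => ?_, ?_⟩, mem_insert_self i S⟩
    · rcases mem_insert.1 hx with h | h
      · exact h ▸ hi
      · exact (mem_erase.1 (hS.1 h)).2
    · rw [card_insert_of_notMem hiS, hS.2]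
  rw [← Finset.card_erase_of_mem hi, ← Finset.card_powersetCard m (T.erase i)]
  refine Finset.card_bij' (fun S _ => S.erase i) (fun S _ => insert i S) hfwd hbwd ?_ ?_
  · intro S hS
    simp only [mem_filter] at hS
    exact insert_erase hS.2
  · intro S hS
    rw [mem_powersetCard] at hS
    have hiS : i ∉ S := fun h => (mem_erase.1 (hS.1 h)).1 rfl
    exact erase_insert hiS

lemma sum_sum_powersetCard {ι : Type*} [DecidableEq ι] (T : Finset ι) (m : ℕ) (f : ι → ℝ) :
    ∑ S ∈ T.powersetCard (m+1), ∑ i ∈ S, f i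
      = ((T.card - 1).choose m : ℝ) * ∑ i ∈ T, f i := by
  have h1 : ∀ S ∈ T.powersetCard (m+1), ∑ i ∈ S, f i
      = ∑ i ∈ T, if i ∈ S then f i else 0 := by
    intro S hS
    rw [sum_ite_mem, Finset.inter_eq_right.2 (mem_powersetCard.1 hS).1]
  rw [Finset.sum_congr rfl h1, Finset.sum_comm, Finset.mul_sum]
  refine Finset.sum_congr rfl fun i hi => ?_
  rw [← Finset.sum_filter, Finset.sum_const, count_lemma T i hi m, nsmul_eq_mul]


/-- The Shapley value of player `j` under the utility
`U₂(S) = 2·⟪(1/|S|)·Σ_{i∈S} x i, α⟫` (with `U₂ ∅ = 0`), expressed via the full sum. -/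
theorem shapley_U2_full_sum_form
    {ι : Type*} [Fintype ι] [DecidableEq ι]
    {E : Type*} [NormedAddCommGroup E] [InnerProductSpace ℝ E]
    (n : ℕ) (hn : 2 ≤ n) (hcard : Fintype.card ι = n)
    (x : ι → E) (α : E) (U₂ : Finset ι → ℝ)
    (hU : ∀ S : Finset ι, S.Nonempty →
      U₂ S = 2 * ⟪(S.card : ℝ)⁻¹ • ∑ i ∈ S, x i, α⟫)
    (hU0 : U₂ ∅ = 0)
    (φ : ι → ℝ)
    (hφ : ∀ i : ι, φ i = (n : ℝ)⁻¹ * ∑ k ∈ Icc 1 n,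
      ((Nat.choose (n - 1) (k - 1) : ℝ))⁻¹ *
        ∑ S ∈ (Finset.univ.erase i).powerset.filter (fun S => S.card = k - 1),
          (U₂ (insert i S) - U₂ S))
    (j : ι) :
    φ j = 2 * (((∑ k ∈ Icc 1 (n - 1), (1 : ℝ) / k) / (n - 1)) * ⟪x j, α⟫
      - (((∑ k ∈ Icc 1 n, (1 : ℝ) / k) - 1) / (n * (n - 1))) * ⟪(∑ i, x i), α⟫) := by
  set a : ι → ℝ := fun i => ⟪x i, α⟫ with ha
  -- uniform formula for U₂
  have hg : ∀ S : Finset ι, U₂ S = 2 * ((S.card : ℝ)⁻¹ * ∑ i ∈ S, a i) := by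
    intro S
    rcases S.eq_empty_or_nonempty with rfl | hS
    · simpa using hU0
    · rw [hU S hS, real_inner_smul_left, sum_inner]
  set T : ℝ := ∑ i ∈ Finset.univ.erase j, a i with hT
  have hcerase : (Finset.univ.erase j).card = n - 1 := by
    rw [card_erase_of_mem (mem_univ j), card_univ, hcard]
  have hjerase : ∀ S ∈ (Finset.univ.erase j).powerset, j ∉ S := by
    intro S hS hj
    exact (mem_erase.1 ((mem_powerset.1 hS) hj)).1 rfl
  -- the sum over Icc 1 n, split off k = 1
  have hsplit : ∀ f : ℕ → ℝ, ∑ k ∈ Icc 1 n, f k = f 1 + ∑ k ∈ Icc 2 n, f k := by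
    intro f
    rw [← Finset.sum_erase_add (Icc 1 n) f (a := 1) (by rw [Finset.mem_Icc]; omega)]
    rw [Finset.Icc_erase_left, ← Finset.Icc_add_one_left_eq_Ioc]
    ring
  -- k = 1 term
  have hk1 : ((Nat.choose (n - 1) 0 : ℝ))⁻¹ *
        ∑ S ∈ (Finset.univ.erase j).powerset.filter (fun S => S.card = 0),
          (U₂ (insert j S) - U₂ S) = 2 * a j := by
    rw [← Finset.powersetCard_eq_filter, Finset.powersetCard_zero, Finset.sum_singleton]
    simp [hg, hU0]
  -- k ≥ 2 terms
  have hk2 : ∀ k ∈ Icc 2 n, ((Nat.choose (n - 1) (k - 1) : ℝ))⁻¹ *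
        ∑ S ∈ (Finset.univ.erase j).powerset.filter (fun S => S.card = k - 1),
          (U₂ (insert j S) - U₂ S)
      = 2 * (k : ℝ)⁻¹ * a j - 2 / ((k : ℝ) * ((n : ℝ) - 1)) * T := by
    intro k hk
    rw [Finset.mem_Icc] at hk
    obtain ⟨hk2', hkn⟩ := hk
    rw [← Finset.powersetCard_eq_filter]
    have hm : k - 1 = (k - 2) + 1 := by omega
    have hdiff : ∀ S ∈ (Finset.univ.erase j).powersetCard (k-1),
        U₂ (insert j S) - U₂ S
          = 2 * (k:ℝ)⁻¹ * a j + (2 * (k:ℝ)⁻¹ - 2 * ((k:ℝ) - 1)⁻¹) * ∑ i ∈ S, a i := by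
      intro S hS
      rw [mem_powersetCard] at hS
      have hjS : j ∉ S := fun h => (mem_erase.1 (hS.1 h)).1 rfl
      rw [hg, hg, card_insert_of_notMem hjS, hS.2, Finset.sum_insert hjS]
      have h1 : ((k - 1 + 1 : ℕ) : ℝ) = (k : ℝ) := by
        have : k - 1 + 1 = k := by omega
        rw [this]
      have h2 : ((k - 1 : ℕ) : ℝ) = (k : ℝ) - 1 := by
        push_cast [Nat.cast_sub (show 1 ≤ k by omega)]
        ring
      rw [h1, h2]; ring
    rw [Finset.sum_congr rfl hdiff, Finset.sum_add_distrib, Finset.sum_const,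
      Finset.card_powersetCard, hcerase, ← Finset.mul_sum, hm,
      sum_sum_powersetCard, hcerase, ← hT, nsmul_eq_mul]
    have hmm : k - 2 + 1 = k - 1 := by omega
    rw [hmm]
    set c1 : ℝ := ((n-1).choose (k-1) : ℝ) with hc1def
    set c2 : ℝ := ((n-1-1).choose (k-2) : ℝ) with hc2def
    have hc1 : c1 ≠ 0 := by
      rw [hc1def]
      exact Nat.cast_ne_zero.mpr (Nat.choose_pos (show k-1 ≤ n-1 by omega)).ne'
    have hrel : ((n:ℝ) - 1) * c2 = c1 * ((k:ℝ) - 1) := by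
      have hnat : (n-1) * ((n-1-1).choose (k-2)) = ((n-1).choose (k-1)) * (k-1) := by
        have h1 : n - 1 = (n - 2).succ := by omega
        have h2 : k - 1 = (k - 2).succ := by omega
        have h3 : n - 1 - 1 = n - 2 := by omega
        rw [h3, h1, h2]
        exact Nat.add_one_mul_choose_eq (n-2) (k-2)
      have := congrArg (fun m : ℕ => (m : ℝ)) hnat
      push_cast [Nat.cast_sub (show 1 ≤ n by omega), Nat.cast_sub (show 1 ≤ k by omega)] at this
      rw [hc1def, hc2def]
      push_cast
      linarith [this]
    have hk0 : (k:ℝ) ≠ 0 := by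
      exact_mod_cast (show k ≠ 0 by omega)
    have hk1' : (k:ℝ) - 1 ≠ 0 := by
      have : (2:ℝ) ≤ (k:ℝ) := by exact_mod_cast hk2'
      linarith
    have hn1 : (n:ℝ) - 1 ≠ 0 := by
      have : (2:ℝ) ≤ (n:ℝ) := by exact_mod_cast hn
      linarith
    have hc2' : c2 = c1 * ((k:ℝ) - 1) / ((n:ℝ) - 1) := by
      field_simp
      linarith [hrel]
    rw [hc2']
    field_simp
    ring
  rw [hφ j, hsplit, hk1, Finset.sum_congr rfl hk2]
  have hS2 : ∑ k ∈ Icc 2 n, (1:ℝ)/k = (∑ k ∈ Icc 1 n, (1:ℝ)/k) - 1 := by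
    rw [hsplit (fun k => (1:ℝ)/(k:ℝ))]
    norm_num
  have h1 : ∀ k ∈ Icc 2 n, 2 * (k:ℝ)⁻¹ * a j - 2 / ((k:ℝ) * ((n:ℝ) - 1)) * T
      = (2 * a j) * ((1:ℝ)/k) - (2 * T / ((n:ℝ) - 1)) * ((1:ℝ)/k) := by
    intro k hk
    rw [Finset.mem_Icc] at hk
    have hk0 : (k:ℝ) ≠ 0 := by exact_mod_cast (show k ≠ 0 by omega)
    have hn1 : (n:ℝ) - 1 ≠ 0 := by
      have : (2:ℝ) ≤ (n:ℝ) := by exact_mod_cast hn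
      linarith
    field_simp
  rw [Finset.sum_congr rfl h1, Finset.sum_sub_distrib, ← Finset.mul_sum, ← Finset.mul_sum, hS2]
  have hA : (⟪(∑ i, x i), α⟫ : ℝ) = T + a j := by
    rw [sum_inner, ← Finset.sum_erase_add _ _ (mem_univ j)]
  have hHH : ∑ k ∈ Icc 1 (n-1), (1:ℝ)/k = (∑ k ∈ Icc 1 n, (1:ℝ)/k) - 1/(n:ℝ) := by
    have hsucc : n - 1 + 1 = n := by omega
    have h := Finset.sum_Icc_succ_top (a := 1) (b := n-1) (by omega) (fun k => (1:ℝ)/(k:ℝ))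
    rw [hsucc] at h
    rw [h]
    ring
  rw [hA, hHH]
  have haj : (⟪x j, α⟫ : ℝ) = a j := rfl
  rw [haj]
  have hn0 : (n:ℝ) ≠ 0 := by
    exact_mod_cast (show n ≠ 0 by omega)
  have hn1 : (n:ℝ) - 1 ≠ 0 := by
    have : (2:ℝ) ≤ (n:ℝ) := by exact_mod_cast hn
    linarith
  field_simp
  ring
end
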